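/- Let τ and τ' be two reduced rooted ordered (planar) trees, each with leaf set {1,…,d} in left-to-right order. If for every 3-element subset A ⊆ {1,…,d} the contractions τ|A and τ'|A are equal, then τ = τ'. -/

import Mathlib

/-- Rooted ordered ("planar") trees: a tree is either a leaf or an internal node carrying an
ordered list of subtrees. -/
inductive PTree : Type where
  | leaf : PTree
  | node : List PTree → PTree

mutual
/-- The number of leaves of a planar tree. -/
def PTree.numLeaves : PTree → ℕ
  | .leaf => 1
  | .node ts => PTree.numLeavesList ts
/-- Total number of leaves of a list of planar trees. -/
def PTree.numLeavesList : List PTree → ℕ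
  | [] => 0
  | t :: rest => t.numLeaves + PTree.numLeavesList rest
end

/-- A planar tree is reduced if every internal node has arity at least `2`. -/
inductive PTree.Reduced : PTree → Prop
  | leaf : PTree.Reduced .leaf
  | node (ts : List PTree) : 2 ≤ ts.length → (∀ t ∈ ts, PTree.Reduced t) →
      PTree.Reduced (.node ts)

mutual
/-- `PTree.contract A t o`: the contraction of `t` onto the set of its leaves whose indices
(in left-to-right order, the leftmost leaf of `t` having index `o`) lie in `A`: take the
subtree spanned by the root and these leaves, suppressing all intermediate nodes of arity `1`;
`none` if no leaf of `t` is selected. -/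
def PTree.contract (A : Finset ℕ) : PTree → ℕ → Option PTree
  | .leaf, o => if o ∈ A then some .leaf else none
  | .node ts, o =>
      match PTree.contractList A ts o with
      | [] => none
      | [t] => some t
      | l => some (.node l)
/-- Contractions of the trees of a list, with leaves numbered consecutively from `o`. -/
def PTree.contractList (A : Finset ℕ) : List PTree → ℕ → List PTree
  | [], _ => []
  | t :: rest, o =>
      match PTree.contract A t o with
      | none => PTree.contractList A rest (o + t.numLeaves)
      | some t' => t' :: PTree.contractList A rest (o + t.numLeaves)
end
lemma length_le_numLeavesList (ts : List PTree) (h : ∀ t ∈ ts, 1 ≤ t.numLeaves) :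
    ts.length ≤ PTree.numLeavesList ts := by
  induction ts with
  | nil => simp [PTree.numLeavesList]
  | cons t rest ih =>
      rw [PTree.numLeavesList]
      have h1 := h t (by simp)
      have h2 := ih (fun u hu => h u (by simp [hu]))
      simp only [List.length_cons]; omega

lemma PTree.one_le_numLeaves {t : PTree} (h : t.Reduced) : 1 ≤ t.numLeaves := by
  induction h with
  | leaf => simp [PTree.numLeaves]
  | node ts hlen hall ih =>
      rw [PTree.numLeaves]
      have := length_le_numLeavesList ts ih
      omega

lemma numLeavesList_nil : PTree.numLeavesList [] = 0 := by rw [PTree.numLeavesList]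

lemma numLeavesList_cons (t : PTree) (rest : List PTree) :
    PTree.numLeavesList (t :: rest) = t.numLeaves + PTree.numLeavesList rest := by
  rw [PTree.numLeavesList]

lemma card_split (A : Finset ℕ) (o n m : ℕ) :
    (A ∩ Finset.Ico o (o + (n + m))).card
      = (A ∩ Finset.Ico o (o + n)).card + (A ∩ Finset.Ico (o + n) (o + n + m)).card := by
  have h1 : o ≤ o + n := Nat.le_add_right _ _
  have h2 : o + n ≤ o + n + m := Nat.le_add_right _ _
  have h : Finset.Ico o (o + (n + m)) = Finset.Ico o (o+n) ∪ Finset.Ico (o+n) (o+n+m) := by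
    rw [Finset.Ico_union_Ico_eq_Ico h1 h2, Nat.add_assoc]
  rw [h, Finset.inter_union_distrib_left, Finset.card_union_of_disjoint]
  exact (Finset.Ico_disjoint_Ico_consecutive o (o+n) (o+n+m)).mono
    Finset.inter_subset_right Finset.inter_subset_right

mutual
theorem PTree.contract_spec (t : PTree) (A : Finset ℕ) (o : ℕ) :
    (PTree.contract A t o = none ↔ (A ∩ Finset.Ico o (o + t.numLeaves)).card = 0) ∧
    (∀ u, PTree.contract A t o = some u →
      u.numLeaves = (A ∩ Finset.Ico o (o + t.numLeaves)).card) := by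
  cases t with
  | leaf =>
      rw [PTree.contract]
      have hI : A ∩ Finset.Ico o (o + PTree.numLeaves .leaf)
          = if o ∈ A then {o} else ∅ := by
        ext x
        rw [PTree.numLeaves]
        by_cases ho : o ∈ A <;> simp [ho, Finset.mem_Ico] <;> omega
      rw [hI]
      by_cases ho : o ∈ A <;> simp [ho, PTree.numLeaves]
  | node ts =>
      have hspec := PTree.contractList_spec ts A o
      rw [PTree.contract, PTree.numLeaves]
      cases hL : PTree.contractList A ts o with
      | nil =>
          rw [hL, numLeavesList_nil] at hspec
          simp [hspec.1.symm]
      | cons u l =>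
          rw [hL] at hspec
          cases l with
          | nil =>
              rw [numLeavesList_cons, numLeavesList_nil] at hspec
              obtain ⟨hsum, hmem⟩ := hspec
              have hu := hmem u (by simp)
              have hne : ¬ ((A ∩ Finset.Ico o (o + PTree.numLeavesList ts)).card = 0) := by omega
              constructor
              · simp [hne]
              · intro v hv
                simp at hv
                rw [← hv]; omega
          | cons v l' =>
              rw [numLeavesList_cons, numLeavesList_cons] at hspec
              obtain ⟨hsum, hmem⟩ := hspec
              have hu := hmem u (by simp)
              have hv := hmem v (by simp)
              have hne : ¬ ((A ∩ Finset.Ico o (o + PTree.numLeavesList ts)).card = 0) := by omega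
              constructor
              · simp [hne]
              · intro w hw
                simp at hw
                rw [← hw, PTree.numLeaves, numLeavesList_cons, numLeavesList_cons]
                omega

theorem PTree.contractList_spec (ts : List PTree) (A : Finset ℕ) (o : ℕ) :
    PTree.numLeavesList (PTree.contractList A ts o)
      = (A ∩ Finset.Ico o (o + PTree.numLeavesList ts)).card ∧
    (∀ u ∈ PTree.contractList A ts o, 1 ≤ u.numLeaves) := by
  cases ts with
  | nil =>
      rw [PTree.contractList]
      simp [numLeavesList_nil, Finset.Ico_self]
  | cons t rest =>
      have hspec := PTree.contract_spec t A o
      have hrest := PTree.contractList_spec rest A (o + t.numLeaves)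
      have hcard : (A ∩ Finset.Ico o (o + PTree.numLeavesList (t :: rest))).card
          = (A ∩ Finset.Ico o (o + t.numLeaves)).card
            + (A ∩ Finset.Ico (o + t.numLeaves)
                (o + t.numLeaves + PTree.numLeavesList rest)).card := by
        rw [numLeavesList_cons]; exact card_split A o _ _
      rw [PTree.contractList, hcard]
      cases hc : PTree.contract A t o with
      | none =>
          have h0 := hspec.1.mp hc
          simp only []
          constructor
          · rw [hrest.1]; omega
          · exact hrest.2
      | some u =>
          have hu := hspec.2 u hc
          have hne : ¬ ((A ∩ Finset.Ico o (o + t.numLeaves)).card = 0) := by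
            intro h0
            rw [← hspec.1] at h0
            rw [hc] at h0; cases h0
          simp only []
          constructor
          · rw [numLeavesList_cons, hrest.1]; omega
          · intro w hw
            simp at hw
            rcases hw with hw | hw
            · rw [hw]; omega
            · exact hrest.2 w hw
end

lemma contract_eq_none (t : PTree) (A : Finset ℕ) (o : ℕ)
    (h : (A ∩ Finset.Ico o (o + t.numLeaves)).card = 0) :
    PTree.contract A t o = none := (PTree.contract_spec t A o).1.mpr h

lemma contractList_eq_nil (ts : List PTree) (A : Finset ℕ) (o : ℕ)
    (h : (A ∩ Finset.Ico o (o + PTree.numLeavesList ts)).card = 0) :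
    PTree.contractList A ts o = [] := by
  have hspec := PTree.contractList_spec ts A o
  cases hL : PTree.contractList A ts o with
  | nil => rfl
  | cons u l =>
      exfalso
      rw [hL, numLeavesList_cons] at hspec
      have := hspec.2 u (by simp)
      omega

mutual
theorem PTree.contract_one (t : PTree) (A : Finset ℕ) (o : ℕ)
    (h : (A ∩ Finset.Ico o (o + t.numLeaves)).card = 1) :
    PTree.contract A t o = some .leaf := by
  cases t with
  | leaf =>
      rw [PTree.contract]
      by_cases ho : o ∈ A
      · simp [ho]
      · exfalso
        have he : A ∩ Finset.Ico o (o + PTree.numLeaves .leaf) = ∅ := by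
          ext x
          simp [PTree.numLeaves, Finset.mem_Ico]
          intro hx h1
          exact ho (h1 ▸ hx)
        rw [he] at h
        simp at h
  | node ts =>
      rw [PTree.numLeaves] at h
      rw [PTree.contract, PTree.contractList_one ts A o h]

theorem PTree.contractList_one (ts : List PTree) (A : Finset ℕ) (o : ℕ)
    (h : (A ∩ Finset.Ico o (o + PTree.numLeavesList ts)).card = 1) :
    PTree.contractList A ts o = [.leaf] := by
  cases ts with
  | nil =>
      exfalso
      rw [numLeavesList_nil] at h
      simp [Finset.Ico_self] at h
  | cons t rest =>
      have hsplit := card_split A o t.numLeaves (PTree.numLeavesList rest)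
      rw [numLeavesList_cons] at h
      rw [h] at hsplit
      rw [PTree.contractList]
      rcases Nat.le_one_iff_eq_zero_or_eq_one.mp
        (show (A ∩ Finset.Ico o (o + t.numLeaves)).card ≤ 1 by omega) with h1 | h1
      · rw [contract_eq_none t A o h1]
        exact PTree.contractList_one rest A (o + t.numLeaves) (by omega)
      · rw [PTree.contract_one t A o h1]
        rw [contractList_eq_nil rest A (o + t.numLeaves) (by omega)]

theorem PTree.contract_two (t : PTree) (A : Finset ℕ) (o : ℕ)
    (h : (A ∩ Finset.Ico o (o + t.numLeaves)).card = 2) :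
    PTree.contract A t o = some (.node [.leaf, .leaf]) := by
  cases t with
  | leaf =>
      exfalso
      have hsub : A ∩ Finset.Ico o (o + PTree.numLeaves .leaf) ⊆ Finset.Ico o (o+1) := by
        rw [PTree.numLeaves]; exact Finset.inter_subset_right
      have := Finset.card_le_card hsub
      rw [Nat.card_Ico] at this
      omega
  | node ts =>
      rw [PTree.numLeaves] at h
      rw [PTree.contract]
      rcases PTree.contractList_two ts A o h with hL | hL <;> rw [hL]

theorem PTree.contractList_two (ts : List PTree) (A : Finset ℕ) (o : ℕ)
    (h : (A ∩ Finset.Ico o (o + PTree.numLeavesList ts)).card = 2) :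
    PTree.contractList A ts o = [.node [.leaf, .leaf]]
      ∨ PTree.contractList A ts o = [.leaf, .leaf] := by
  cases ts with
  | nil =>
      exfalso
      rw [numLeavesList_nil] at h
      simp [Finset.Ico_self] at h
  | cons t rest =>
      have hsplit := card_split A o t.numLeaves (PTree.numLeavesList rest)
      rw [numLeavesList_cons] at h
      rw [h] at hsplit
      rw [PTree.contractList]
      have hle : (A ∩ Finset.Ico o (o + t.numLeaves)).card ≤ 2 := by omega
      interval_cases hc1 : (A ∩ Finset.Ico o (o + t.numLeaves)).card
      · rw [contract_eq_none t A o hc1]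
        exact PTree.contractList_two rest A (o + t.numLeaves) (by omega)
      · rw [PTree.contract_one t A o hc1,
          PTree.contractList_one rest A (o + t.numLeaves) (by omega)]
        right; rfl
      · rw [PTree.contract_two t A o hc1,
          contractList_eq_nil rest A (o + t.numLeaves) (by omega)]
        left; rfl
end

lemma peel_in (A : Finset ℕ) (t : PTree) (rest : List PTree) (o : ℕ)
    (h : (A ∩ Finset.Ico (o + t.numLeaves)
        (o + t.numLeaves + PTree.numLeavesList rest)).card = 0) :
    PTree.contract A (.node (t :: rest)) o = PTree.contract A t o := by
  rw [PTree.contract, PTree.contractList, contractList_eq_nil rest A _ h]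
  cases hc : PTree.contract A t o <;> simp

lemma peel_out (A : Finset ℕ) (t : PTree) (rest : List PTree) (o : ℕ)
    (h : (A ∩ Finset.Ico o (o + t.numLeaves)).card = 0) :
    PTree.contract A (.node (t :: rest)) o
      = PTree.contract A (.node rest) (o + t.numLeaves) := by
  rw [PTree.contract, PTree.contract, PTree.contractList, contract_eq_none t A o h]

lemma contract_node_single (A : Finset ℕ) (t : PTree) (o : ℕ) :
    PTree.contract A (.node [t]) o = PTree.contract A t o := by
  rw [PTree.contract, PTree.contractList, PTree.contractList]
  cases hc : PTree.contract A t o <;> simp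

lemma shape_pair_first (A : Finset ℕ) (t : PTree) (rest : List PTree) (o : ℕ)
    (h1 : (A ∩ Finset.Ico o (o + t.numLeaves)).card = 2)
    (h2 : (A ∩ Finset.Ico (o + t.numLeaves)
        (o + t.numLeaves + PTree.numLeavesList rest)).card = 1) :
    PTree.contract A (.node (t :: rest)) o
      = some (.node [.node [.leaf, .leaf], .leaf]) := by
  rw [PTree.contract, PTree.contractList, PTree.contract_two t A o h1,
    PTree.contractList_one rest A _ h2]

lemma shape_first_one_ne (A : Finset ℕ) (t : PTree) (rest : List PTree) (o : ℕ)
    (h1 : (A ∩ Finset.Ico o (o + t.numLeaves)).card = 1)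
    (h2 : (A ∩ Finset.Ico (o + t.numLeaves)
        (o + t.numLeaves + PTree.numLeavesList rest)).card = 2) :
    PTree.contract A (.node (t :: rest)) o
      ≠ some (.node [.node [.leaf, .leaf], .leaf]) := by
  rw [PTree.contract, PTree.contractList, PTree.contract_one t A o h1]
  rcases PTree.contractList_two rest A _ h2 with hL | hL <;> rw [hL] <;> simp

lemma shape_one_two (A : Finset ℕ) (t₁ t₂ : PTree) (o : ℕ)
    (h1 : (A ∩ Finset.Ico o (o + t₁.numLeaves)).card = 1)
    (h2 : (A ∩ Finset.Ico (o + t₁.numLeaves)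
        (o + t₁.numLeaves + t₂.numLeaves)).card = 2) :
    PTree.contract A (.node [t₁, t₂]) o
      = some (.node [.leaf, .node [.leaf, .leaf]]) := by
  rw [PTree.contract, PTree.contractList, PTree.contract_one t₁ A o h1,
    PTree.contractList, PTree.contract_two t₂ A _ h2, PTree.contractList]

lemma shape_three (A : Finset ℕ) (t₁ t₂ : PTree) (rest : List PTree) (o : ℕ)
    (h1 : (A ∩ Finset.Ico o (o + t₁.numLeaves)).card = 1)
    (h2 : (A ∩ Finset.Ico (o + t₁.numLeaves)
        (o + t₁.numLeaves + t₂.numLeaves)).card = 1)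
    (h3 : (A ∩ Finset.Ico (o + t₁.numLeaves + t₂.numLeaves)
        (o + t₁.numLeaves + t₂.numLeaves + PTree.numLeavesList rest)).card = 1) :
    PTree.contract A (.node (t₁ :: t₂ :: rest)) o
      = some (.node [.leaf, .leaf, .leaf]) := by
  rw [PTree.contract, PTree.contractList, PTree.contract_one t₁ A o h1,
    PTree.contractList, PTree.contract_one t₂ A _ h2,
    PTree.contractList_one rest A _ h3]

lemma first_size_not_lt (o d : ℕ) (t₁ t₁' : PTree) (rest rest' : List PTree)
    (h : ∀ A : Finset ℕ, A ⊆ Finset.Ico o (o + d) → A.card = 3 →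
      PTree.contract A (.node (t₁ :: rest)) o = PTree.contract A (.node (t₁' :: rest')) o)
    (hsum : t₁.numLeaves + PTree.numLeavesList rest = d)
    (hsum' : t₁'.numLeaves + PTree.numLeavesList rest' = d)
    (h1 : 1 ≤ t₁.numLeaves) (hL' : 1 ≤ PTree.numLeavesList rest')
    (hlt : t₁.numLeaves < t₁'.numLeaves) : False := by
  set n := t₁.numLeaves with hn
  set n' := t₁'.numLeaves with hn'
  set B : Finset ℕ := {o, o + n, o + d - 1} with hB
  have hd3 : n + 2 ≤ d := by omega
  have hB3 : B.card = 3 :=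
    Finset.card_eq_three.mpr ⟨o, o + n, o + d - 1, by omega, by omega, by omega, rfl⟩
  have hBsub : B ⊆ Finset.Ico o (o + d) := by
    intro x hx
    simp only [hB, Finset.mem_insert, Finset.mem_singleton] at hx
    simp only [Finset.mem_Ico]
    omega
  have c1' : (B ∩ Finset.Ico o (o + n')).card = 2 := by
    have e : B ∩ Finset.Ico o (o + n') = {o, o + n} := by
      ext x
      simp only [hB, Finset.mem_inter, Finset.mem_insert, Finset.mem_singleton, Finset.mem_Ico]
      omega
    rw [e, Finset.card_insert_of_notMem (by simp; omega), Finset.card_singleton]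
  have c2' : (B ∩ Finset.Ico (o + n') (o + n' + PTree.numLeavesList rest')).card = 1 := by
    have e : B ∩ Finset.Ico (o + n') (o + n' + PTree.numLeavesList rest') = {o + d - 1} := by
      ext x
      simp only [hB, Finset.mem_inter, Finset.mem_insert, Finset.mem_singleton, Finset.mem_Ico]
      omega
    rw [e, Finset.card_singleton]
  have c1 : (B ∩ Finset.Ico o (o + n)).card = 1 := by
    have e : B ∩ Finset.Ico o (o + n) = {o} := by
      ext x
      simp only [hB, Finset.mem_inter, Finset.mem_insert, Finset.mem_singleton, Finset.mem_Ico]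
      omega
    rw [e, Finset.card_singleton]
  have c2 : (B ∩ Finset.Ico (o + n) (o + n + PTree.numLeavesList rest)).card = 2 := by
    have e : B ∩ Finset.Ico (o + n) (o + n + PTree.numLeavesList rest) = {o + n, o + d - 1} := by
      ext x
      simp only [hB, Finset.mem_inter, Finset.mem_insert, Finset.mem_singleton, Finset.mem_Ico]
      omega
    rw [e, Finset.card_insert_of_notMem (by simp; omega), Finset.card_singleton]
  have heq := h B hBsub hB3
  rw [shape_pair_first B t₁' rest' o c1' c2'] at heq
  exact shape_first_one_ne B t₁ rest o c1 c2 heq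

lemma mixed_absurd (o d : ℕ) (t₁ t₂ t₁' t₂' t₃' : PTree) (r₃' : List PTree)
    (h : ∀ A : Finset ℕ, A ⊆ Finset.Ico o (o + d) → A.card = 3 →
      PTree.contract A (.node [t₁, t₂]) o
        = PTree.contract A (.node (t₁' :: t₂' :: t₃' :: r₃')) o)
    (hsum : t₁.numLeaves + t₂.numLeaves = d)
    (hsum' : t₁'.numLeaves + (t₂'.numLeaves + (t₃'.numLeaves + PTree.numLeavesList r₃')) = d)
    (hnn : t₁.numLeaves = t₁'.numLeaves)
    (h1 : 1 ≤ t₁.numLeaves) (h2' : 1 ≤ t₂'.numLeaves) (h3' : 1 ≤ t₃'.numLeaves) : False := by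
  set n := t₁.numLeaves with hn
  set B : Finset ℕ := {o, o + n, o + d - 1} with hB
  have hd2 : n + 2 ≤ d := by omega
  have hB3 : B.card = 3 :=
    Finset.card_eq_three.mpr ⟨o, o + n, o + d - 1, by omega, by omega, by omega, rfl⟩
  have hBsub : B ⊆ Finset.Ico o (o + d) := by
    intro x hx
    simp only [hB, Finset.mem_insert, Finset.mem_singleton] at hx
    simp only [Finset.mem_Ico]
    omega
  have c1 : (B ∩ Finset.Ico o (o + t₁.numLeaves)).card = 1 := by
    have e : B ∩ Finset.Ico o (o + t₁.numLeaves) = {o} := by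
      ext x
      simp only [hB, Finset.mem_inter, Finset.mem_insert, Finset.mem_singleton, Finset.mem_Ico]
      omega
    rw [e, Finset.card_singleton]
  have c2 : (B ∩ Finset.Ico (o + t₁.numLeaves) (o + t₁.numLeaves + t₂.numLeaves)).card = 2 := by
    have e : B ∩ Finset.Ico (o + t₁.numLeaves) (o + t₁.numLeaves + t₂.numLeaves)
        = {o + n, o + d - 1} := by
      ext x
      simp only [hB, Finset.mem_inter, Finset.mem_insert, Finset.mem_singleton, Finset.mem_Ico]
      omega
    rw [e, Finset.card_insert_of_notMem (by simp; omega), Finset.card_singleton]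
  have c1' : (B ∩ Finset.Ico o (o + t₁'.numLeaves)).card = 1 := by
    have e : B ∩ Finset.Ico o (o + t₁'.numLeaves) = {o} := by
      ext x
      simp only [hB, Finset.mem_inter, Finset.mem_insert, Finset.mem_singleton, Finset.mem_Ico]
      omega
    rw [e, Finset.card_singleton]
  have c2' : (B ∩ Finset.Ico (o + t₁'.numLeaves)
      (o + t₁'.numLeaves + t₂'.numLeaves)).card = 1 := by
    have e : B ∩ Finset.Ico (o + t₁'.numLeaves) (o + t₁'.numLeaves + t₂'.numLeaves)
        = {o + n} := by
      ext x
      simp only [hB, Finset.mem_inter, Finset.mem_insert, Finset.mem_singleton, Finset.mem_Ico]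
      omega
    rw [e, Finset.card_singleton]
  have c3' : (B ∩ Finset.Ico (o + t₁'.numLeaves + t₂'.numLeaves)
      (o + t₁'.numLeaves + t₂'.numLeaves + PTree.numLeavesList (t₃' :: r₃'))).card = 1 := by
    have e : B ∩ Finset.Ico (o + t₁'.numLeaves + t₂'.numLeaves)
        (o + t₁'.numLeaves + t₂'.numLeaves + PTree.numLeavesList (t₃' :: r₃'))
        = {o + d - 1} := by
      rw [numLeavesList_cons]
      ext x
      simp only [hB, Finset.mem_inter, Finset.mem_insert, Finset.mem_singleton, Finset.mem_Ico]
      omega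
    rw [e, Finset.card_singleton]
  have heq := h B hBsub hB3
  rw [shape_one_two B t₁ t₂ o c1 c2, shape_three B t₁' t₂' (t₃' :: r₃') o c1' c2' c3'] at heq
  simp at heq

theorem contract_aux (d : ℕ) : ∀ τ τ' : PTree, τ.Reduced → τ'.Reduced →
    τ.numLeaves = d → τ'.numLeaves = d → ∀ o : ℕ,
    (∀ A : Finset ℕ, A ⊆ Finset.Ico o (o + d) → A.card = 3 →
      PTree.contract A τ o = PTree.contract A τ' o) → τ = τ' := by
  induction d using Nat.strong_induction_on with
  | _ d ih =>
  intro τ τ' hτ hτ' hd hd' o h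
  cases hτ with
  | leaf =>
    cases hτ' with
    | leaf => rfl
    | node ts' hlen' hall' =>
        exfalso
        simp [PTree.numLeaves] at hd hd'
        have := length_le_numLeavesList ts' (fun t ht => PTree.one_le_numLeaves (hall' t ht))
        omega
  | node ts hlen hall =>
    cases hτ' with
    | leaf =>
        exfalso
        simp [PTree.numLeaves] at hd hd'
        have := length_le_numLeavesList ts (fun t ht => PTree.one_le_numLeaves (hall t ht))
        omega
    | node ts' hlen' hall' =>
        cases ts with
        | nil => simp at hlen
        | cons t₁ rest =>
        cases ts' with
        | nil => simp at hlen'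
        | cons t₁' rest' =>
        rw [PTree.numLeaves, numLeavesList_cons] at hd hd'
        have h1 : 1 ≤ t₁.numLeaves := PTree.one_le_numLeaves (hall t₁ (by simp))
        have h1' : 1 ≤ t₁'.numLeaves := PTree.one_le_numLeaves (hall' t₁' (by simp))
        have hLlen : rest.length ≤ PTree.numLeavesList rest :=
          length_le_numLeavesList rest (fun t ht => PTree.one_le_numLeaves (hall t (by simp [ht])))
        have hLlen' : rest'.length ≤ PTree.numLeavesList rest' :=
          length_le_numLeavesList rest' (fun t ht => PTree.one_le_numLeaves (hall' t (by simp [ht])))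
        simp only [List.length_cons] at hlen hlen'
        have hL : 1 ≤ PTree.numLeavesList rest := by omega
        have hL' : 1 ≤ PTree.numLeavesList rest' := by omega
        -- first child sizes agree
        have hnn : t₁.numLeaves = t₁'.numLeaves := by
          rcases lt_trichotomy t₁.numLeaves t₁'.numLeaves with hlt | heq | hgt
          · exact absurd (first_size_not_lt o d t₁ t₁' rest rest' h hd hd' h1 hL' hlt) id
          · exact heq
          · exact absurd (first_size_not_lt o d t₁' t₁ rest' rest
              (fun A hA hc => (h A hA hc).symm) hd' hd h1' hL hgt) id
        -- first children agree
        have key1 : ∀ A : Finset ℕ, A ⊆ Finset.Ico o (o + t₁.numLeaves) → A.card = 3 →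
            PTree.contract A t₁ o = PTree.contract A t₁' o := by
          intro A hA hc
          have hout : ∀ k m : ℕ, t₁.numLeaves ≤ k →
              (A ∩ Finset.Ico (o + k) m).card = 0 := by
            intro k m hk
            rw [Finset.card_eq_zero]
            ext x
            simp only [Finset.mem_inter, Finset.mem_Ico, Finset.notMem_empty, iff_false]
            rintro ⟨hxA, hx1, hx2⟩
            have := hA hxA
            simp only [Finset.mem_Ico] at this
            omega
          rw [← peel_in A t₁ rest o (hout _ _ le_rfl),
            ← peel_in A t₁' rest' o (hout _ _ (le_of_eq hnn))]
          exact h A (hA.trans (Finset.Ico_subset_Ico le_rfl (by omega))) hc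
        have ht1 : t₁ = t₁' := by
          refine ih t₁.numLeaves (by omega) t₁ t₁' (hall t₁ (by simp)) (hall' t₁' (by simp))
            rfl hnn.symm o key1
        -- the remaining children agree
        have key2 : ∀ A : Finset ℕ,
            A ⊆ Finset.Ico (o + t₁.numLeaves) (o + t₁.numLeaves + PTree.numLeavesList rest) →
            A.card = 3 →
            PTree.contract A (.node rest) (o + t₁.numLeaves)
              = PTree.contract A (.node rest') (o + t₁.numLeaves) := by
          intro A hA hc
          have hin : (A ∩ Finset.Ico o (o + t₁.numLeaves)).card = 0 := by
            rw [Finset.card_eq_zero]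
            ext x
            simp only [Finset.mem_inter, Finset.mem_Ico, Finset.notMem_empty, iff_false]
            rintro ⟨hxA, hx1, hx2⟩
            have := hA hxA
            simp only [Finset.mem_Ico] at this
            omega
          have hin' : (A ∩ Finset.Ico o (o + t₁'.numLeaves)).card = 0 := by
            rw [← hnn]; exact hin
          rw [← peel_out A t₁ rest o hin]
          have e2 := peel_out A t₁' rest' o hin'
          rw [← hnn] at e2
          rw [← e2]
          exact h A (hA.trans (Finset.Ico_subset_Ico (by omega) (by omega))) hc
        cases rest with
        | nil => simp at hlen
        | cons t₂ rest₂ =>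
        cases rest' with
        | nil => simp at hlen'
        | cons t₂' rest₂' =>
        have h2 : 1 ≤ t₂.numLeaves := PTree.one_le_numLeaves (hall t₂ (by simp))
        have h2' : 1 ≤ t₂'.numLeaves := PTree.one_le_numLeaves (hall' t₂' (by simp))
        cases rest₂ with
        | nil =>
          cases rest₂' with
          | nil =>
            -- both have exactly two children
            rw [numLeavesList_cons, numLeavesList_nil] at hd hd' hL hL' key2
            have ht2 : t₂ = t₂' := by
              refine ih t₂.numLeaves (by omega) t₂ t₂' (hall t₂ (by simp)) (hall' t₂' (by simp))
                rfl (by omega) (o + t₁.numLeaves) ?_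
              intro A hA hc
              rw [← contract_node_single A t₂ (o + t₁.numLeaves),
                ← contract_node_single A t₂' (o + t₁.numLeaves)]
              exact key2 A (by simpa using hA) hc
            rw [ht1, ht2]
          | cons t₃' rest₃' =>
            exfalso
            rw [numLeavesList_cons, numLeavesList_nil] at hd
            rw [numLeavesList_cons, numLeavesList_cons] at hd'
            have h3' : 1 ≤ t₃'.numLeaves := PTree.one_le_numLeaves (hall' t₃' (by simp))
            exact mixed_absurd o d t₁ t₂ t₁' t₂' t₃' rest₃' h hd hd' hnn h1 h2' h3'
        | cons t₃ rest₃ =>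
          cases rest₂' with
          | nil =>
            exfalso
            rw [numLeavesList_cons, numLeavesList_nil] at hd'
            rw [numLeavesList_cons, numLeavesList_cons] at hd
            have h3 : 1 ≤ t₃.numLeaves := PTree.one_le_numLeaves (hall t₃ (by simp))
            exact mixed_absurd o d t₁' t₂' t₁ t₂ t₃ rest₃
              (fun A hA hc => (h A hA hc).symm) hd' hd hnn.symm h1' h2 h3
          | cons t₃' rest₃' =>
            -- both tails have at least two children
            have hρ : PTree.Reduced (.node (t₂ :: t₃ :: rest₃)) :=
              .node _ (by simp) (fun t ht => hall t (by simp at ht; rcases ht with h|h|h <;> simp [h]))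
            have hρ' : PTree.Reduced (.node (t₂' :: t₃' :: rest₃')) :=
              .node _ (by simp) (fun t ht => hall' t (by simp at ht; rcases ht with h|h|h <;> simp [h]))
            have hrr : PTree.node (t₂ :: t₃ :: rest₃) = PTree.node (t₂' :: t₃' :: rest₃') := by
              refine ih (PTree.numLeavesList (t₂ :: t₃ :: rest₃)) (by omega) _ _ hρ hρ'
                (by rw [PTree.numLeaves]) (by rw [PTree.numLeaves]; omega)
                (o + t₁.numLeaves) key2
            rw [ht1]
            injection hrr with hrr'
            rw [hrr']

/-- two reduced planar trees with the same number `d` of leaves (numbered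
`0,…,d−1` in left-to-right order) coincide as soon as their contractions on every `3`-element
subset of the leaves coincide. -/
theorem reduced_tree_determined_by_triple_contractions (d : ℕ) (τ τ' : PTree)
    (hτ : τ.Reduced) (hτ' : τ'.Reduced)
    (hd : τ.numLeaves = d) (hd' : τ'.numLeaves = d)
    (h : ∀ A : Finset ℕ, A ⊆ Finset.range d → A.card = 3 →
      PTree.contract A τ 0 = PTree.contract A τ' 0) :
    τ = τ' := by
  refine contract_aux d τ τ' hτ hτ' hd hd' 0 ?_
  intro A hA hc
  exact h A (by rwa [Finset.range_eq_Ico, ← Nat.zero_add d]) hc
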